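/- Cutting-set separation property: in the cutting-set procedure for the robust constraint H(x + δ) ≥ τ' for all δ ∈ U, if H is G-Lipschitz and iterate x^(t) satisfies the constraints for all previously found scenarios δ^(1),…,δ^(t−1) while each earlier iterate x^(s) (s < t) had a violation τ' − H(x^(s) + δ^(s)) > ε, then ‖x^(t) − x^(s)‖ ≥ ε/G for all s < t. -/
import Mathlib


/-- Cutting-set separation property: if `H` is `G`-Lipschitz, each earlier iterate `x s`
(`s < t`) had violation `τ' - H (x s + δ s) > ε` for its scenario `δ s ∈ U`, and the
current iterate `x t` satisfies `H (x t + δ s) ≥ τ'` for all `s < t`, then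
`‖x t - x s‖ ≥ ε / G` for all `s < t`. -/
theorem cutting_set_separation {E : Type*} [NormedAddCommGroup E] [NormedSpace ℝ E]
    (H : E → ℝ) (G : ℝ) (hG : 0 < G)
    (hLip : ∀ u v : E, |H u - H v| ≤ G * ‖u - v‖)
    (τ' ε : ℝ) (hε : 0 < ε) (U : Set E)
    (x δ : ℕ → E) (t : ℕ)
    (hδU : ∀ s, δ s ∈ U)
    (hviol : ∀ s < t, H (x s + δ s) < τ' - ε)
    (hsat : ∀ s < t, τ' ≤ H (x t + δ s)) :
    ∀ s < t, ε / G ≤ ‖x t - x s‖ := by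
  intro s hs
  have h1 := hviol s hs
  have h2 := hsat s hs
  have h3 := hLip (x t + δ s) (x s + δ s)
  have hnorm : x t + δ s - (x s + δ s) = x t - x s := by abel
  rw [hnorm] at h3
  have : ε ≤ G * ‖x t - x s‖ := by
    have := le_abs_self (H (x t + δ s) - H (x s + δ s))
    linarith
  rw [div_le_iff₀ hG] at *
  linarith [this]
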